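/- In a Whittle network, the distribution π(n) = a·Φ(n)·∏_{i=1}^N ρ_i^{n_i} satisfies the partial balance equations π(n)Σ_{j∈I'} φ_{ij}(n) = Σ_{j∈I'} π(T_{ij}n)φ_{ji}(T_{ij}n) for every n ∈ ℤ₊^N and every i ∈ {0,1,...,N}, where (ρ_i) is any positive solution of the traffic equations ν = Σ_j ρ_j p_{j0} and ρ_i = Σ_j ρ_j p_{ji} + ν p_{0i} for all i ∈ {1,...,N}. -/
import Mathlib


/-- In a Whittle network with balance function `Φ` and routing matrix `p`, the distribution
`π n = a Φ(n) ∏_i ρ_i^{n_i}` satisfies the partial balance equations, where `ρ` is any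
positive solution of the traffic equations. States are extended from `ℤ₊^N` to `ℤ^N`
with `Φ` vanishing at states with a negative coordinate (the convention `Φ(T_i n) = 0`
when `n_i = 0`); `e i` is the `i`-th unit vector (`e 0 = 0`). -/
theorem stmt8 (N : ℕ) (ν : ℝ) (hν : 0 ≤ ν)
    (p : Fin (N + 1) → Fin (N + 1) → ℝ) (hp : ∀ i j, 0 ≤ p i j)
    (hst : ∀ i, ∑ j, p i j = 1) (hp00 : p 0 0 = 0)
    (Φ : (Fin N → ℤ) → ℝ)
    (hΦpos : ∀ n : Fin N → ℤ, (∀ k, 0 ≤ n k) → 0 < Φ n)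
    (hΦz : ∀ n : Fin N → ℤ, (∃ k, n k < 0) → Φ n = 0)
    (e : Fin (N + 1) → (Fin N → ℤ))
    (he : ∀ i k, e i k = if (k : ℕ) + 1 = (i : ℕ) then 1 else 0)
    (φ : Fin (N + 1) → Fin (N + 1) → (Fin N → ℤ) → ℝ)
    (hφ0 : ∀ j n, φ 0 j n = ν * p 0 j)
    (hφi : ∀ (i : Fin N) (j : Fin (N + 1)) (n : Fin N → ℤ),
      φ i.succ j n = Φ (n - e i.succ) / Φ n * p i.succ j)
    (ρ : Fin N → ℝ) (hρpos : ∀ i, 0 < ρ i)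
    (htr0 : ν = ∑ j, ρ j * p j.succ 0)
    (htr : ∀ i : Fin N, ρ i = ∑ j, ρ j * p j.succ i.succ + ν * p 0 i.succ)
    (a : ℝ) (ha : 0 < a)
    (π : (Fin N → ℤ) → ℝ)
    (hπ : ∀ n, π n = a * Φ n * ∏ i, ρ i ^ (n i)) :
    ∀ n : Fin N → ℤ, (∀ k, 0 ≤ n k) → ∀ i,
      π n * ∑ j, φ i j n = ∑ j, π (n - e i + e j) * φ j i (n - e i + e j) := by
  have hρne : ∀ i, ρ i ≠ 0 := fun i => (hρpos i).ne'
  have he0 : e 0 = 0 := by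
    funext k; rw [he]; simp
  have hesucc : ∀ (j k : Fin N), e j.succ k = if k = j then 1 else 0 := by
    intro j k; rw [he]
    simp [Fin.val_succ, Fin.ext_iff]
  have henn : ∀ (j : Fin (N+1)) (k : Fin N), 0 ≤ e j k := by
    intro j k; rw [he]; split <;> norm_num
  -- product lemma
  have hprod : ∀ (m : Fin N → ℤ) (l : Fin N),
      ∏ i, ρ i ^ (m i + e l.succ i) = (∏ i, ρ i ^ (m i)) * ρ l := by
    intro m l
    have h1 : ∀ i : Fin N, ρ i ^ (m i + e l.succ i)
        = ρ i ^ (m i) * (if i = l then ρ i else 1) := by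
      intro i
      rw [hesucc]
      by_cases h : i = l
      · simp [h, zpow_add_one₀ (hρne l)]
      · simp [h]
    simp_rw [h1, Finset.prod_mul_distrib]
    congr 1
    simp
  intro n hn i
  have hΦn : Φ n ≠ 0 := (hΦpos n hn).ne'
  induction i using Fin.cases with
  | zero =>
    rw [he0, sub_zero]
    -- LHS
    have hL : π n * ∑ j, φ 0 j n = π n * ν := by
      simp_rw [hφ0, ← Finset.mul_sum, hst]
      ring
    rw [hL, Fin.sum_univ_succ]
    have h0 : π (n + e 0) * φ 0 0 (n + e 0) = 0 := by
      rw [hφ0, hp00]; ring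
    rw [h0]
    have hterm : ∀ l : Fin N, π (n + e l.succ) * φ l.succ 0 (n + e l.succ)
        = π n * (ρ l * p l.succ 0) := by
      intro l
      have hM : ∀ k, 0 ≤ (n + e l.succ) k := by
        intro k; have := hn k; have := henn l.succ k
        simp only [Pi.add_apply]; omega
      have hMne : Φ (n + e l.succ) ≠ 0 := (hΦpos _ hM).ne'
      rw [hφi, add_sub_cancel_right, hπ, hπ]
      have hpr : ∏ i, ρ i ^ ((n + e l.succ) i) = (∏ i, ρ i ^ (n i)) * ρ l := by
        simpa using hprod n l
      rw [hpr]
      field_simp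
      try ring
    rw [Finset.sum_congr rfl (fun l _ => hterm l), ← Finset.mul_sum, ← htr0]
    ring
  | succ k =>
    have hm : ∀ i, n i = (n - e k.succ) i + e k.succ i := by
      intro i; simp
    set m := n - e k.succ with hmdef
    -- LHS
    have hL : π n * ∑ j, φ k.succ j n = a * Φ m * ((∏ i, ρ i ^ (m i)) * ρ k) := by
      simp_rw [hφi, ← Finset.mul_sum, hst, mul_one, hπ]
      rw [show (∏ i, ρ i ^ (n i)) = (∏ i, ρ i ^ (m i)) * ρ k by
        rw [← hprod m k]; exact Finset.prod_congr rfl fun i _ => by rw [← hm]]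
      field_simp
      try ring
    rw [hL, Fin.sum_univ_succ]
    have h0 : π (m + e 0) * φ 0 k.succ (m + e 0)
        = a * Φ m * (∏ i, ρ i ^ (m i)) * (ν * p 0 k.succ) := by
      rw [he0, add_zero, hφ0, hπ]; try ring
    have hterm : ∀ l : Fin N, π (m + e l.succ) * φ l.succ k.succ (m + e l.succ)
        = a * Φ m * (∏ i, ρ i ^ (m i)) * (ρ l * p l.succ k.succ) := by
      intro l
      rw [hφi, add_sub_cancel_right, hπ]
      by_cases hM : Φ (m + e l.succ) = 0
      · have hmz : Φ m = 0 := by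
          rcases not_forall.mp (fun h => (hΦpos _ h).ne' hM) with ⟨k', hk'⟩
          apply hΦz
          refine ⟨k', ?_⟩
          have h1 : ¬ (0 ≤ (m + e l.succ) k') := hk'
          have h2 := henn l.succ k'
          simp only [Pi.add_apply] at h1
          omega
        rw [hM, hmz]; ring
      · have hpr : ∏ i, ρ i ^ ((m + e l.succ) i) = (∏ i, ρ i ^ (m i)) * ρ l := by
          simpa using hprod m l
        rw [hpr]
        field_simp
        try ring
    rw [h0, Finset.sum_congr rfl (fun l _ => hterm l), ← Finset.mul_sum]
    rw [htr k]
    ring
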